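/- Let s ∈ (1/2, 1] and let G_s = F_s·F_s'. Then G_s is continuously differentiable on ℝ, and G_s' is bounded and uniformly continuous on ℝ. -/

import Mathlib

/-- The cutoff function `θ` of Definition 4.3: `θ(t) = (3/8)|t|^{1/2}(|t|² − (10/3)|t| + 5)`
for `|t| ≤ 1` and `θ(t) = 1` for `|t| > 1`. -/
noncomputable def theta (t : ℝ) : ℝ :=
  if |t| ≤ 1 then (3 / 8) * |t| ^ ((1 : ℝ) / 2) * (|t| ^ 2 - (10 / 3) * |t| + 5) else 1

/-- The auxiliary function `F_s(t) = θ(t)·|t|^s` of Definition 4.3. -/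
noncomputable def Fs (s t : ℝ) : ℝ := theta t * |t| ^ s

open Real Filter Set Topology

lemma hasDerivAt_phi_ne {e t : ℝ} (ht : t ≠ 0) :
    HasDerivAt (fun u : ℝ => |u| ^ e * u) ((e + 1) * |t| ^ e) t := by
  rcases ht.lt_or_gt with h | h
  · have key : (-t) ^ e = (-t) ^ (e - 1) * (-t) := by
      rw [← Real.rpow_add_one (neg_ne_zero.2 ht)]; ring_nf
    have h1 : HasDerivAt (fun u : ℝ => (-u) ^ e * u)
        ((e * (-t) ^ (e - 1) * (-1)) * t + (-t) ^ e * 1) t :=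
      (((Real.hasDerivAt_rpow_const (p := e) (Or.inl (neg_ne_zero.2 ht))).comp t
        (hasDerivAt_neg t))).mul (hasDerivAt_id t)
    have h2 : (fun u : ℝ => (-u) ^ e * u) =ᶠ[nhds t] (fun u : ℝ => |u| ^ e * u) := by
      filter_upwards [eventually_lt_nhds h] with u hu
      rw [abs_of_neg hu]
    have h3 := h1.congr_of_eventuallyEq h2.symm
    refine h3.congr_deriv ?_
    rw [abs_of_neg h, key]; ring
  · have key : t ^ e = t ^ (e - 1) * t := by
      rw [← Real.rpow_add_one ht]; ring_nf
    have h1 : HasDerivAt (fun u : ℝ => u ^ e * u)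
        ((e * t ^ (e - 1)) * t + t ^ e * 1) t :=
      (Real.hasDerivAt_rpow_const (p := e) (Or.inl ht)).mul (hasDerivAt_id t)
    have h2 : (fun u : ℝ => u ^ e * u) =ᶠ[nhds t] (fun u : ℝ => |u| ^ e * u) := by
      filter_upwards [eventually_gt_nhds h] with u hu
      rw [abs_of_pos hu]
    have h3 := h1.congr_of_eventuallyEq h2.symm
    refine h3.congr_deriv ?_
    rw [abs_of_pos h, key]; ring

lemma hasDerivAt_phi {e : ℝ} (he : 0 < e) (t : ℝ) :
    HasDerivAt (fun u : ℝ => |u| ^ e * u) ((e + 1) * |t| ^ e) t := by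
  rcases eq_or_ne t 0 with rfl | ht
  · rw [hasDerivAt_iff_tendsto_slope]
    have h2 : (fun u : ℝ => |u| ^ e) =ᶠ[𝓝[≠] (0:ℝ)] slope (fun u : ℝ => |u| ^ e * u) 0 := by
      filter_upwards [self_mem_nhdsWithin] with u hu
      have hu' : u ≠ 0 := hu
      simp [slope_def_field]
      field_simp
    rw [← tendsto_congr' h2]
    have hc : ContinuousAt (fun u : ℝ => |u| ^ e) 0 :=
      (Real.continuousAt_rpow_const _ _ (Or.inr he.le)).comp continuous_abs.continuousAt
    have := hc.tendsto.mono_left (nhdsWithin_le_nhds (s := {(0:ℝ)}ᶜ))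
    simpa [Real.zero_rpow he.ne'] using this
  · exact hasDerivAt_phi_ne ht

lemma hasDerivAt_abs_rpow_ne {p t : ℝ} (ht : t ≠ 0) :
    HasDerivAt (fun u : ℝ => |u| ^ p) (p * |t| ^ (p - 2) * t) t := by
  rcases ht.lt_or_gt with h | h
  · have key : (-t) ^ (p - 1) = (-t) ^ (p - 2) * (-t) := by
      rw [← Real.rpow_add_one (neg_ne_zero.2 ht)]; ring_nf
    have h1 : HasDerivAt (fun u : ℝ => (-u) ^ p) ((p * (-t) ^ (p - 1)) * (-1)) t :=
      (Real.hasDerivAt_rpow_const (p := p) (Or.inl (neg_ne_zero.2 ht))).comp t (hasDerivAt_neg t)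
    have h2 : (fun u : ℝ => (-u) ^ p) =ᶠ[nhds t] (fun u : ℝ => |u| ^ p) := by
      filter_upwards [eventually_lt_nhds h] with u hu
      rw [abs_of_neg hu]
    have h3 := h1.congr_of_eventuallyEq h2.symm
    refine h3.congr_deriv ?_
    rw [abs_of_neg h, key]; ring
  · have key : t ^ (p - 1) = t ^ (p - 2) * t := by
      rw [← Real.rpow_add_one ht]; ring_nf
    have h1 : HasDerivAt (fun u : ℝ => u ^ p) (p * t ^ (p - 1)) t :=
      Real.hasDerivAt_rpow_const (p := p) (Or.inl ht)
    have h2 : (fun u : ℝ => u ^ p) =ᶠ[nhds t] (fun u : ℝ => |u| ^ p) := by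
      filter_upwards [eventually_gt_nhds h] with u hu
      rw [abs_of_pos hu]
    have h3 := h1.congr_of_eventuallyEq h2.symm
    refine h3.congr_deriv ?_
    rw [abs_of_pos h, key]; ring

lemma continuous_abs_rpow {e : ℝ} (he : 0 < e) : Continuous fun t : ℝ => |t| ^ e :=
  continuous_iff_continuousAt.2 fun _ =>
    (Real.continuousAt_rpow_const _ _ (Or.inr he.le)).comp continuous_abs.continuousAt

noncomputable def Fid (s t : ℝ) : ℝ :=
  3 / 8 * ((s + 5 / 2) * |t| ^ (s + 5 / 2 - 2) * t - 10 / 3 * ((s + 3 / 2) * |t| ^ (s + 3 / 2 - 2) * t)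
    + 5 * ((s + 1 / 2) * |t| ^ (s + 1 / 2 - 2) * t))

noncomputable def Fd (s t : ℝ) : ℝ :=
  if |t| ≤ 1 then Fid s t else s * |t| ^ (s - 2) * t

noncomputable def Gi (s t : ℝ) : ℝ :=
  9 / 64 * ((s + 5 / 2) * (|t| ^ (2 * s + 3) * t) - 10 / 3 * (2 * s + 4) * (|t| ^ (2 * s + 2) * t)
    + 190 / 9 * (s + 3 / 2) * (|t| ^ (2 * s + 1) * t) - 50 / 3 * (2 * s + 2) * (|t| ^ (2 * s) * t)
    + 25 * (s + 1 / 2) * (|t| ^ (2 * s - 1) * t))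

noncomputable def Gid (s t : ℝ) : ℝ :=
  9 / 64 * ((s + 5 / 2) * ((2 * s + 3 + 1) * |t| ^ (2 * s + 3))
    - 10 / 3 * (2 * s + 4) * ((2 * s + 2 + 1) * |t| ^ (2 * s + 2))
    + 190 / 9 * (s + 3 / 2) * ((2 * s + 1 + 1) * |t| ^ (2 * s + 1))
    - 50 / 3 * (2 * s + 2) * ((2 * s + 1) * |t| ^ (2 * s))
    + 25 * (s + 1 / 2) * ((2 * s - 1 + 1) * |t| ^ (2 * s - 1)))

noncomputable def Gd (s t : ℝ) : ℝ :=
  if |t| ≤ 1 then Gid s t else s * (2 * s - 1) * (max |t| 1) ^ (2 * s - 2)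

lemma Fs_eq_inner {s t : ℝ} (hs : 0 < s) (h : |t| ≤ 1) :
    Fs s t = 3 / 8 * (|t| ^ (s + 5 / 2) - 10 / 3 * |t| ^ (s + 3 / 2) + 5 * |t| ^ (s + 1 / 2)) := by
  unfold Fs theta
  rw [if_pos h]
  rcases eq_or_ne t 0 with rfl | ht
  · rw [abs_zero, Real.zero_rpow (by norm_num : (1:ℝ)/2 ≠ 0),
      Real.zero_rpow hs.ne', Real.zero_rpow (by positivity : s + 5/2 ≠ 0),
      Real.zero_rpow (by positivity : s + 3/2 ≠ 0), Real.zero_rpow (by positivity : s + 1/2 ≠ 0)]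
    ring
  · have ha : 0 < |t| := abs_pos.2 ht
    have e1 : |t| ^ (s + 5 / 2) = |t| ^ ((1:ℝ) / 2) * |t| ^ s * (|t| * |t|) := by
      rw [show s + (5:ℝ)/2 = 1/2 + s + (1 + 1) by ring, Real.rpow_add ha, Real.rpow_add ha,
        Real.rpow_add ha, Real.rpow_one]
    have e2 : |t| ^ (s + 3 / 2) = |t| ^ ((1:ℝ) / 2) * |t| ^ s * |t| := by
      rw [show s + (3:ℝ)/2 = 1/2 + s + 1 by ring, Real.rpow_add ha, Real.rpow_add ha,
        Real.rpow_one]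
    have e3 : |t| ^ (s + 1 / 2) = |t| ^ ((1:ℝ) / 2) * |t| ^ s := by
      rw [show s + (1:ℝ)/2 = 1/2 + s by ring, Real.rpow_add ha]
    rw [e1, e2, e3, pow_two]
    ring

lemma theta_eq_one {t : ℝ} (h : 1 ≤ |t|) : theta t = 1 := by
  unfold theta
  rcases h.eq_or_lt with h1 | h1
  · rw [if_pos h1.ge, show |t| = 1 from h1.symm]
    norm_num
  · rw [if_neg (not_le.2 h1)]

lemma Fs_eq_outer {s t : ℝ} (h : 1 ≤ |t|) : Fs s t = |t| ^ s := by
  unfold Fs; rw [theta_eq_one h, one_mul]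

lemma hasDerivAt_Fi {s : ℝ} (hs : 1 / 2 < s) (t : ℝ) :
    HasDerivAt (fun u : ℝ => 3 / 8 * (|u| ^ (s + 5 / 2) - 10 / 3 * |u| ^ (s + 3 / 2)
      + 5 * |u| ^ (s + 1 / 2))) (Fid s t) t := by
  have h1 : (1:ℝ) < s + 5 / 2 := by linarith
  have h2 : (1:ℝ) < s + 3 / 2 := by linarith
  have h3 : (1:ℝ) < s + 1 / 2 := by linarith
  exact (((hasDerivAt_abs_rpow t h1).sub ((hasDerivAt_abs_rpow t h2).const_mul (10/3))).add
    ((hasDerivAt_abs_rpow t h3).const_mul (5:ℝ))).const_mul (3/8)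

lemma Fid_one {s : ℝ} : Fid s 1 = s := by
  simp only [Fid, abs_one, Real.one_rpow]; ring

lemma Fid_neg_one {s : ℝ} : Fid s (-1) = -s := by
  simp only [Fid, abs_neg, abs_one, Real.one_rpow]; ring

lemma hasDerivAt_Fs {s : ℝ} (hs : 1 / 2 < s) (t : ℝ) : HasDerivAt (Fs s) (Fd s t) t := by
  rcases lt_trichotomy |t| 1 with hlt | heq | hgt
  · have hmem : {u : ℝ | |u| < 1} ∈ 𝓝 t := (isOpen_Iio.preimage continuous_abs).mem_nhds hlt
    have heqf : (Fs s) =ᶠ[𝓝 t] fun u : ℝ => 3 / 8 * (|u| ^ (s + 5 / 2)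
        - 10 / 3 * |u| ^ (s + 3 / 2) + 5 * |u| ^ (s + 1 / 2)) := by
      filter_upwards [hmem] with u hu
      exact Fs_eq_inner (by linarith) hu.le
    have := (hasDerivAt_Fi hs t).congr_of_eventuallyEq heqf
    rwa [show Fd s t = Fid s t from if_pos hlt.le]
  · rcases (abs_eq (by norm_num : (0:ℝ) ≤ 1)).1 heq with rfl | rfl
    · -- t = 1
      have hL : HasDerivWithinAt (Fs s) (Fid s 1) (Iic 1) 1 := by
        refine ((hasDerivAt_Fi hs 1).hasDerivWithinAt).congr_of_eventuallyEq ?_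
          (Fs_eq_inner (by linarith) (by norm_num))
        filter_upwards [eventually_nhdsWithin_of_eventually_nhds
          (eventually_gt_nhds (zero_lt_one)), self_mem_nhdsWithin] with u hu0 hu1
        exact Fs_eq_inner (by linarith) (abs_le.2 ⟨by linarith, hu1⟩)
      have hR : HasDerivWithinAt (Fs s) (Fid s 1) (Ici 1) 1 := by
        have hout : HasDerivAt (fun u : ℝ => |u| ^ s) (s * |(1:ℝ)| ^ (s - 2) * 1) 1 :=
          hasDerivAt_abs_rpow_ne one_ne_zero
        have hval : s * |(1:ℝ)| ^ (s - 2) * 1 = Fid s 1 := by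
          rw [Fid_one, abs_one, Real.one_rpow]; ring
        refine (hval ▸ hout.hasDerivWithinAt).congr_of_eventuallyEq ?_
          (Fs_eq_outer (by norm_num))
        filter_upwards [self_mem_nhdsWithin] with u hu1
        exact Fs_eq_outer (le_trans hu1 (le_abs_self u))
      have := hL.union hR
      rw [Iic_union_Ici] at this
      have h := hasDerivWithinAt_univ.1 this
      rwa [show Fd s 1 = Fid s 1 from if_pos (by norm_num)]
    · -- t = -1
      have hL : HasDerivWithinAt (Fs s) (Fid s (-1)) (Iic (-1)) (-1) := by
        have hout : HasDerivAt (fun u : ℝ => |u| ^ s) (s * |(-1:ℝ)| ^ (s - 2) * (-1)) (-1) :=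
          hasDerivAt_abs_rpow_ne (by norm_num)
        have hval : s * |(-1:ℝ)| ^ (s - 2) * (-1) = Fid s (-1) := by
          rw [Fid_neg_one, abs_neg, abs_one, Real.one_rpow]; ring
        refine (hval ▸ hout.hasDerivWithinAt).congr_of_eventuallyEq ?_
          (Fs_eq_outer (by norm_num))
        filter_upwards [self_mem_nhdsWithin] with u hu1
        exact Fs_eq_outer (by have hu : u ≤ -1 := hu1; rw [abs_of_nonpos (by linarith)]; linarith)
      have hR : HasDerivWithinAt (Fs s) (Fid s (-1)) (Ici (-1)) (-1) := by
        refine ((hasDerivAt_Fi hs (-1)).hasDerivWithinAt).congr_of_eventuallyEq ?_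
          (Fs_eq_inner (by linarith) (by norm_num))
        filter_upwards [eventually_nhdsWithin_of_eventually_nhds
          (eventually_lt_nhds (by norm_num : (-1:ℝ) < 0)), self_mem_nhdsWithin] with u hu0 hu1
        exact Fs_eq_inner (by linarith) (abs_le.2 ⟨hu1, by linarith⟩)
      have := hL.union hR
      rw [Iic_union_Ici] at this
      have h := hasDerivWithinAt_univ.1 this
      rwa [show Fd s (-1) = Fid s (-1) from if_pos (by norm_num)]
  · have ht0 : t ≠ 0 := by
      intro h; rw [h, abs_zero] at hgt; linarith
    have hmem : {u : ℝ | 1 < |u|} ∈ 𝓝 t := (isOpen_Ioi.preimage continuous_abs).mem_nhds hgt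
    have heqf : (Fs s) =ᶠ[𝓝 t] fun u : ℝ => |u| ^ s := by
      filter_upwards [hmem] with u hu
      exact Fs_eq_outer hu.le
    have := (hasDerivAt_abs_rpow_ne (p := s) ht0).congr_of_eventuallyEq heqf
    rwa [show Fd s t = s * |t| ^ (s - 2) * t from if_neg (not_le.2 hgt)]

lemma G_eq_inner {s t : ℝ} (hs : 1 / 2 < s) (h : |t| ≤ 1) :
    Fs s t * Fd s t = Gi s t := by
  rw [Fs_eq_inner (by linarith) h, show Fd s t = Fid s t from if_pos h]
  rcases eq_or_ne t 0 with rfl | ht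
  · simp [Fid, Gi]
  · have ha : 0 < |t| := abs_pos.2 ht
    set u := |t| ^ ((1:ℝ) / 2) with hu
    set v := |t| ^ (s - 3 / 2) with hv
    have base : ∀ (c : ℝ) (n : ℕ), |t| ^ (c + (n:ℝ) / 2) = |t| ^ c * u ^ n := by
      intro c n
      rw [Real.rpow_add ha, hu, ← Real.rpow_natCast (|t| ^ ((1:ℝ)/2)) n,
        ← Real.rpow_mul ha.le]
      congr 2
      ring
    have e1 : |t| ^ (s + 5 / 2) = v * u ^ 8 := by
      rw [show s + (5:ℝ)/2 = (s - 3/2) + ((8:ℕ):ℝ)/2 by push_cast; ring, base, hv]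
    have e2 : |t| ^ (s + 3 / 2) = v * u ^ 6 := by
      rw [show s + (3:ℝ)/2 = (s - 3/2) + ((6:ℕ):ℝ)/2 by push_cast; ring, base, hv]
    have e3 : |t| ^ (s + 1 / 2) = v * u ^ 4 := by
      rw [show s + (1:ℝ)/2 = (s - 3/2) + ((4:ℕ):ℝ)/2 by push_cast; ring, base, hv]
    have e4 : |t| ^ (s + 5 / 2 - 2) = v * u ^ 4 := by
      rw [show s + (5:ℝ)/2 - 2 = (s - 3/2) + ((4:ℕ):ℝ)/2 by push_cast; ring, base, hv]
    have e5 : |t| ^ (s + 3 / 2 - 2) = v * u ^ 2 := by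
      rw [show s + (3:ℝ)/2 - 2 = (s - 3/2) + ((2:ℕ):ℝ)/2 by push_cast; ring, base, hv]
    have e6 : |t| ^ (s + 1 / 2 - 2) = v := by
      rw [show s + (1:ℝ)/2 - 2 = s - 3/2 by ring, hv]
    have g1 : |t| ^ (2 * s + 3) = v * (v * u ^ 12) := by
      rw [show 2 * s + (3:ℝ) = (s - 3/2) + ((s - 3/2) + ((12:ℕ):ℝ)/2) by push_cast; ring,
        Real.rpow_add ha, base, hv]
    have g2 : |t| ^ (2 * s + 2) = v * (v * u ^ 10) := by
      rw [show 2 * s + (2:ℝ) = (s - 3/2) + ((s - 3/2) + ((10:ℕ):ℝ)/2) by push_cast; ring,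
        Real.rpow_add ha, base, hv]
    have g3 : |t| ^ (2 * s + 1) = v * (v * u ^ 8) := by
      rw [show 2 * s + (1:ℝ) = (s - 3/2) + ((s - 3/2) + ((8:ℕ):ℝ)/2) by push_cast; ring,
        Real.rpow_add ha, base, hv]
    have g4 : |t| ^ (2 * s) = v * (v * u ^ 6) := by
      rw [show 2 * s = (s - 3/2) + ((s - 3/2) + ((6:ℕ):ℝ)/2) by push_cast; ring,
        Real.rpow_add ha, base, hv]
    have g5 : |t| ^ (2 * s - 1) = v * (v * u ^ 4) := by
      rw [show 2 * s - (1:ℝ) = (s - 3/2) + ((s - 3/2) + ((4:ℕ):ℝ)/2) by push_cast; ring,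
        Real.rpow_add ha, base, hv]
    unfold Fid Gi
    rw [e1, e2, e3, e4, e5, e6, g1, g2, g3, g4, g5]
    ring

lemma G_eq_outer {s t : ℝ} (hs : 1 / 2 < s) (h : 1 ≤ |t|) :
    Fs s t * Fd s t = s * (|t| ^ (2 * s - 2) * t) := by
  have ht : t ≠ 0 := by
    intro h0; rw [h0, abs_zero] at h; linarith
  rw [Fs_eq_outer h]
  rcases h.eq_or_lt with h1 | h1
  · rw [show Fd s t = Fid s t from if_pos h1.ge]
    unfold Fid
    rw [show |t| = 1 from h1.symm]
    simp only [Real.one_rpow]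
    ring
  · rw [show Fd s t = s * |t| ^ (s - 2) * t from if_neg (not_le.2 h1),
      show 2 * s - 2 = s + (s - 2) by ring, Real.rpow_add (abs_pos.2 ht)]
    ring

lemma Gid_eq {s t : ℝ} (h : |t| = 1) : Gid s t = s * (2 * s - 1) := by
  unfold Gid; rw [h]; simp only [Real.one_rpow]; ring

lemma hasDerivAt_Gi {s : ℝ} (hs : 1 / 2 < s) (t : ℝ) :
    HasDerivAt (Gi s) (Gid s t) t := by
  have p1 : (0:ℝ) < 2 * s + 3 := by linarith
  have p2 : (0:ℝ) < 2 * s + 2 := by linarith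
  have p3 : (0:ℝ) < 2 * s + 1 := by linarith
  have p4 : (0:ℝ) < 2 * s := by linarith
  have p5 : (0:ℝ) < 2 * s - 1 := by linarith
  exact ((((((hasDerivAt_phi p1 t).const_mul (s + 5/2)).sub
    ((hasDerivAt_phi p2 t).const_mul (10/3 * (2*s+4)))).add
    ((hasDerivAt_phi p3 t).const_mul (190/9 * (s+3/2)))).sub
    ((hasDerivAt_phi p4 t).const_mul (50/3 * (2*s+2)))).add
    ((hasDerivAt_phi p5 t).const_mul (25 * (s+1/2)))).const_mul (9/64)

lemma hasDerivAt_G {s : ℝ} (hs : 1 / 2 < s) (t : ℝ) :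
    HasDerivAt (fun t => Fs s t * Fd s t) (Gd s t) t := by
  rcases lt_trichotomy |t| 1 with hlt | heq | hgt
  · have hmem : {u : ℝ | |u| < 1} ∈ 𝓝 t := (isOpen_Iio.preimage continuous_abs).mem_nhds hlt
    have heqf : (fun u => Fs s u * Fd s u) =ᶠ[𝓝 t] Gi s := by
      filter_upwards [hmem] with u hu
      exact G_eq_inner hs hu.le
    have := (hasDerivAt_Gi hs t).congr_of_eventuallyEq heqf
    rwa [show Gd s t = Gid s t from if_pos hlt.le]
  · have hGdt : Gd s t = Gid s t := if_pos heq.le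
    have houtd : ∀ x : ℝ, x ≠ 0 → |x| = 1 →
        HasDerivAt (fun u : ℝ => s * (|u| ^ (2 * s - 2) * u)) (Gid s x) x := by
      intro x hx hax
      have := (hasDerivAt_phi_ne (e := 2 * s - 2) hx).const_mul s
      rw [hax, Real.one_rpow] at this
      refine this.congr_deriv ?_
      rw [Gid_eq hax]; ring
    rcases (abs_eq (by norm_num : (0:ℝ) ≤ 1)).1 heq with rfl | rfl
    · have hL : HasDerivWithinAt (fun u => Fs s u * Fd s u) (Gid s 1) (Iic 1) 1 := by
        refine ((hasDerivAt_Gi hs 1).hasDerivWithinAt).congr_of_eventuallyEq ?_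
          (G_eq_inner hs (by norm_num))
        filter_upwards [eventually_nhdsWithin_of_eventually_nhds
          (eventually_gt_nhds (zero_lt_one)), self_mem_nhdsWithin] with u hu0 hu1
        exact G_eq_inner hs (abs_le.2 ⟨by linarith, hu1⟩)
      have hR : HasDerivWithinAt (fun u => Fs s u * Fd s u) (Gid s 1) (Ici 1) 1 := by
        refine ((houtd 1 one_ne_zero (by norm_num)).hasDerivWithinAt).congr_of_eventuallyEq ?_
          (G_eq_outer hs (by norm_num))
        filter_upwards [self_mem_nhdsWithin] with u hu1
        exact G_eq_outer hs (le_trans hu1 (le_abs_self u))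
      have := hL.union hR
      rw [Iic_union_Ici] at this
      rw [hGdt]
      exact hasDerivWithinAt_univ.1 this
    · have hL : HasDerivWithinAt (fun u => Fs s u * Fd s u) (Gid s (-1)) (Iic (-1)) (-1) := by
        refine ((houtd (-1) (by norm_num) (by norm_num)).hasDerivWithinAt).congr_of_eventuallyEq
          ?_ (G_eq_outer hs (by norm_num))
        filter_upwards [self_mem_nhdsWithin] with u hu1
        exact G_eq_outer hs (by have hu : u ≤ -1 := hu1; rw [abs_of_nonpos (by linarith)]; linarith)
      have hR : HasDerivWithinAt (fun u => Fs s u * Fd s u) (Gid s (-1)) (Ici (-1)) (-1) := by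
        refine ((hasDerivAt_Gi hs (-1)).hasDerivWithinAt).congr_of_eventuallyEq ?_
          (G_eq_inner hs (by norm_num))
        filter_upwards [eventually_nhdsWithin_of_eventually_nhds
          (eventually_lt_nhds (by norm_num : (-1:ℝ) < 0)), self_mem_nhdsWithin] with u hu0 hu1
        exact G_eq_inner hs (abs_le.2 ⟨hu1, by linarith⟩)
      have := hL.union hR
      rw [Iic_union_Ici] at this
      rw [hGdt]
      exact hasDerivWithinAt_univ.1 this
  · have ht0 : t ≠ 0 := by
      intro h; rw [h, abs_zero] at hgt; linarith
    have hmem : {u : ℝ | 1 < |u|} ∈ 𝓝 t := (isOpen_Ioi.preimage continuous_abs).mem_nhds hgt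
    have heqf : (fun u => Fs s u * Fd s u) =ᶠ[𝓝 t] fun u : ℝ => s * (|u| ^ (2 * s - 2) * u) := by
      filter_upwards [hmem] with u hu
      exact G_eq_outer hs hu.le
    have hout := (hasDerivAt_phi_ne (e := 2 * s - 2) ht0).const_mul s
    have := hout.congr_of_eventuallyEq heqf
    refine this.congr_deriv ?_
    rw [show Gd s t = s * (2 * s - 1) * (max |t| 1) ^ (2 * s - 2) from if_neg (not_le.2 hgt),
      max_eq_left hgt.le]
    ring

lemma continuous_Gid {s : ℝ} (hs : 1 / 2 < s) : Continuous (Gid s) := by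
  have p1 : (0:ℝ) < 2 * s + 3 := by linarith
  have p2 : (0:ℝ) < 2 * s + 2 := by linarith
  have p3 : (0:ℝ) < 2 * s + 1 := by linarith
  have p4 : (0:ℝ) < 2 * s := by linarith
  have p5 : (0:ℝ) < 2 * s - 1 := by linarith
  unfold Gid
  exact continuous_const.mul (((((continuous_const.mul
    (continuous_const.mul (continuous_abs_rpow p1))).sub
    (continuous_const.mul (continuous_const.mul (continuous_abs_rpow p2)))).add
    (continuous_const.mul (continuous_const.mul (continuous_abs_rpow p3)))).sub
    (continuous_const.mul (continuous_const.mul (continuous_abs_rpow p4)))).add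
    (continuous_const.mul (continuous_const.mul (continuous_abs_rpow p5))))

lemma continuous_Gout {s : ℝ} :
    Continuous fun t : ℝ => s * (2 * s - 1) * (max |t| 1) ^ (2 * s - 2) := by
  refine continuous_const.mul (Continuous.rpow_const (continuous_abs.max continuous_const) ?_)
  intro x
  exact Or.inl (ne_of_gt (lt_of_lt_of_le one_pos (le_max_right _ _)))

lemma continuous_Gd {s : ℝ} (hs : 1 / 2 < s) : Continuous (Gd s) := by
  have : Gd s = fun t : ℝ =>
      if |t| ≤ 1 then Gid s t else s * (2 * s - 1) * (max |t| 1) ^ (2 * s - 2) := rfl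
  rw [this]
  refine Continuous.if_le (continuous_Gid hs) continuous_Gout continuous_abs continuous_const ?_
  intro x hx
  rw [Gid_eq hx, hx, max_self, Real.one_rpow, mul_one]

lemma uc_Gout {s : ℝ} (hs1 : 1 / 2 < s) (hs2 : s ≤ 1) :
    UniformContinuous fun t : ℝ => s * (2 * s - 1) * (max |t| 1) ^ (2 * s - 2) := by
  have lip1 : LipschitzOnWith (Real.toNNReal (2 - 2 * s)) (fun x : ℝ => x ^ (2 * s - 2))
      (Ici (1:ℝ)) := by
    apply (convex_Ici (1:ℝ)).lipschitzOnWith_of_nnnorm_hasDerivWithin_le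
      (f' := fun x : ℝ => (2 * s - 2) * x ^ (2 * s - 2 - 1))
    · intro x hx
      have hx1 : (1:ℝ) ≤ x := hx
      exact (Real.hasDerivAt_rpow_const (Or.inl (by linarith))).hasDerivWithinAt
    · intro x hx
      have hx1 : (1:ℝ) ≤ x := hx
      rw [← NNReal.coe_le_coe, coe_nnnorm, Real.coe_toNNReal _ (by linarith)]
      rw [Real.norm_eq_abs, abs_mul, abs_of_nonpos (by linarith : 2 * s - 2 ≤ 0),
        abs_of_nonneg (Real.rpow_nonneg (by linarith) _)]
      have h1 : x ^ (2 * s - 2 - 1) ≤ 1 :=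
        Real.rpow_le_one_of_one_le_of_nonpos hx1 (by linarith)
      have h2 : (0:ℝ) ≤ x ^ (2 * s - 2 - 1) := Real.rpow_nonneg (by linarith) _
      nlinarith
  have lip2 : LipschitzWith 1 (fun t : ℝ => max |t| 1) := by
    have := (LipschitzWith.max_const (lipschitzWith_one_norm (E := ℝ)) 1)
    simpa [Real.norm_eq_abs] using this
  have lipc : LipschitzOnWith (Real.toNNReal (2 - 2 * s) * 1)
      ((fun x : ℝ => x ^ (2 * s - 2)) ∘ fun t : ℝ => max |t| 1) univ :=
    lip1.comp (lip2.lipschitzOnWith) (fun x _ => mem_Ici.2 (le_max_right _ _))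
  have lipf : LipschitzWith (Real.toNNReal (2 - 2 * s) * 1)
      (fun t : ℝ => (max |t| 1) ^ (2 * s - 2)) := lipschitzOnWith_univ.1 lipc
  have := (lipf.uniformContinuous).const_smul (s * (2 * s - 1))
  exact this

lemma uc_Gd {s : ℝ} (hs1 : 1 / 2 < s) (hs2 : s ≤ 1) : UniformContinuous (Gd s) := by
  set v : ℝ → ℝ := fun t => s * (2 * s - 1) * (max |t| 1) ^ (2 * s - 2) with hv
  have hu_uc : UniformContinuous fun t => Gd s t - v t := by
    apply HasCompactSupport.uniformContinuous_of_continuous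
    · apply HasCompactSupport.intro (isCompact_Icc (a := (-1:ℝ)) (b := 1))
      intro x hx
      have h1 : ¬ |x| ≤ 1 := by
        intro h; exact hx (abs_le.1 h)
      rw [hv]
      simp only [show Gd s x = s * (2 * s - 1) * (max |x| 1) ^ (2 * s - 2) from if_neg h1]
      ring
    · exact (continuous_Gd hs1).sub continuous_Gout
  have : Gd s = fun t => (Gd s t - v t) + v t := by funext t; ring
  rw [this]
  exact hu_uc.add (uc_Gout hs1 hs2)

lemma bound_Gd {s : ℝ} (hs1 : 1 / 2 < s) (hs2 : s ≤ 1) :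
    ∃ M : ℝ, ∀ t : ℝ, |Gd s t| ≤ M := by
  obtain ⟨C, hC⟩ := (isCompact_Icc (a := (-1:ℝ)) (b := 1)).exists_bound_of_continuousOn
    (continuous_Gd hs1).continuousOn
  refine ⟨max C (s * (2 * s - 1)), fun t => ?_⟩
  by_cases h : |t| ≤ 1
  · exact le_trans (by simpa [Real.norm_eq_abs] using hC t (abs_le.1 h)) (le_max_left _ _)
  · push_neg at h
    rw [show Gd s t = s * (2 * s - 1) * (max |t| 1) ^ (2 * s - 2) from if_neg (not_le.2 h)]
    have h1 : (max |t| 1) ^ (2 * s - 2) ≤ 1 :=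
      Real.rpow_le_one_of_one_le_of_nonpos (le_max_right _ _) (by linarith)
    have h2 : (0:ℝ) ≤ (max |t| 1) ^ (2 * s - 2) :=
      Real.rpow_nonneg (le_trans zero_le_one (le_max_right _ _)) _
    have h3 : (0:ℝ) ≤ s * (2 * s - 1) := by nlinarith
    rw [abs_of_nonneg (by positivity)]
    refine le_trans ?_ (le_max_right _ _)
    nlinarith

/-- For `s ∈ (1/2, 1]`, the function `G_s = F_s · F_s'` is continuously differentiable on
`ℝ`, and `G_s'` is bounded and uniformly continuous on `ℝ`. -/
theorem stmt_13 (s : ℝ) (hs1 : 1 / 2 < s) (hs2 : s ≤ 1) :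
    ContDiff ℝ 1 (fun t => Fs s t * deriv (Fs s) t) ∧
    (∃ M : ℝ, ∀ t : ℝ, |deriv (fun u => Fs s u * deriv (Fs s) u) t| ≤ M) ∧
    UniformContinuous (deriv (fun u => Fs s u * deriv (Fs s) u)) := by
  have hFd : deriv (Fs s) = Fd s := funext fun t => (hasDerivAt_Fs hs1 t).deriv
  rw [hFd]
  have hGd : deriv (fun t => Fs s t * Fd s t) = Gd s :=
    funext fun t => (hasDerivAt_G hs1 t).deriv
  refine ⟨?_, ?_, ?_⟩
  · rw [contDiff_one_iff_deriv]
    exact ⟨fun t => (hasDerivAt_G hs1 t).differentiableAt,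
      by rw [hGd]; exact continuous_Gd hs1⟩
  · rw [show (fun u => Fs s u * Fd s u) = fun t => Fs s t * Fd s t from rfl, hGd]
    exact bound_Gd hs1 hs2
  · rw [show (fun u => Fs s u * Fd s u) = fun t => Fs s t * Fd s t from rfl, hGd]
    exact uc_Gd hs1 hs2
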